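/- Total variation diminishing property of the averaging operator: Let u : ℝ → ℝ have bounded variation, and for Δx > 0 define the piecewise constant function P(u) by P(u)(x) = (1/Δx)·∫_{x_{j−1/2}}^{x_{j+1/2}} u(y) dy for x ∈ (x_{j−1/2}, x_{j+1/2}), with x_{j±1/2} = (j ± 1/2)Δx. Then TV(P(u)) ≤ TV(u). -/

import Mathlib

open MeasureTheory

lemma tsum_edist_le_evar (u : ℝ → ℝ) (x : ℤ → ℝ) (hx : Monotone x) :
    ∑' k : ℤ, edist (u (x (k + 1))) (u (x k)) ≤ eVariationOn u Set.univ := by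
  rw [ENNReal.tsum_eq_iSup_sum]
  refine iSup_le fun F => ?_
  rcases F.eq_empty_or_nonempty with rfl | hF
  · simp
  set m := F.min' hF with hm
  set M := F.max' hF with hM
  have hmM : m ≤ M := F.min'_le M (F.max'_mem hF)
  have hsub : F ⊆ Finset.Icc m M := fun k hk =>
    Finset.mem_Icc.2 ⟨F.min'_le k hk, F.le_max' k hk⟩
  calc ∑ k ∈ F, edist (u (x (k + 1))) (u (x k))
      ≤ ∑ k ∈ Finset.Icc m M, edist (u (x (k + 1))) (u (x k)) :=
        Finset.sum_le_sum_of_subset hsub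
    _ ≤ eVariationOn u Set.univ := by
        set n := (M - m).toNat + 1 with hn
        have hsum : ∑ k ∈ Finset.Icc m M, edist (u (x (k + 1))) (u (x k)) =
            ∑ i ∈ Finset.range n, edist (u (x (m + i + 1))) (u (x (m + i))) := by
          refine Finset.sum_nbij' (fun k => (k - m).toNat) (fun i => m + i) ?_ ?_ ?_ ?_ ?_
          · intro k hk
            rw [Finset.mem_Icc] at hk
            simp only [Finset.mem_range]
            omega
          · intro i hi
            simp only [Finset.mem_range] at hi
            simp only [Finset.mem_Icc]
            omega
          · intro k hk
            rw [Finset.mem_Icc] at hk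
            omega
          · intro i hi
            simp only [Finset.mem_range] at hi
            omega
          · intro k hk
            rw [Finset.mem_Icc] at hk
            have h1 : m + (((k - m).toNat : ℤ)) = k := by omega
            simp only [h1]
        rw [hsum]
        have := eVariationOn.sum_le (f := u) (n := n)
          (u := fun i => x (m + i))
          (fun i j hij => hx (by exact_mod_cast add_le_add_right (Int.ofNat_le.2 hij) m))
          (fun i => Set.mem_univ _)
        refine le_trans (le_of_eq ?_) this
        refine Finset.sum_congr rfl fun i _ => ?_
        push_cast
        ring_nf

theorem averaging_is_TVD
    (u : ℝ → ℝ) (Δx : ℝ) (hΔ : 0 < Δx)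
    (hmeas : Measurable u)
    (hbv : eVariationOn u Set.univ ≠ ⊤)
    (avg : ℤ → ℝ)
    (havg : ∀ j : ℤ, avg j =
      (1 / Δx) * ∫ y in Set.Ioo (((j : ℝ) - 1/2) * Δx) (((j : ℝ) + 1/2) * Δx), u y) :
    ∑' j : ℤ, ENNReal.ofReal |avg (j + 1) - avg j| ≤ eVariationOn u Set.univ := by
  set V := eVariationOn u Set.univ with hV
  set a : ℤ → ℝ := fun j => ((j : ℝ) - 1/2) * Δx with ha
  set b : ℤ → ℝ := fun j => ((j : ℝ) + 1/2) * Δx with hb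
  set I : ℤ → Set ℝ := fun j => Set.Ioo (a j) (b j) with hI
  set g : ℝ → ENNReal := fun y => ENNReal.ofReal |u (y + Δx) - u y| with hg
  -- boundedness of u
  have hbound : ∀ x : ℝ, |u x| ≤ |u 0| + V.toReal := by
    intro x
    have h1 : edist (u x) (u 0) ≤ V := eVariationOn.edist_le u (Set.mem_univ x) (Set.mem_univ 0)
    have h2 : dist (u x) (u 0) ≤ V.toReal := by
      rw [← ENNReal.toReal_ofReal dist_nonneg, ← edist_dist]
      exact ENNReal.toReal_mono hbv h1
    rw [Real.dist_eq] at h2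
    calc |u x| ≤ |u 0| + |u x - u 0| := by
          have := abs_sub_abs_le_abs_sub (u x) (u 0); linarith
      _ ≤ |u 0| + V.toReal := by linarith
  -- integrability on each cell
  have hIntOn : ∀ (c : ℝ) (j : ℤ), IntegrableOn (fun y => u (y + c)) (I j) := by
    intro c j
    refine Integrable.mono' (g := fun _ => |u 0| + V.toReal)
      (integrableOn_const measure_Ioo_lt_top.ne)
      ((hmeas.comp (measurable_add_const c)).aestronglyMeasurable) ?_
    filter_upwards with y
    simpa [Real.norm_eq_abs] using hbound (y + c)
  have hIu : ∀ j : ℤ, IntegrableOn u (I j) := by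
    intro j
    have := hIntOn 0 j
    simpa using this
  -- translation identity for Bochner integrals
  have htrans : ∀ j : ℤ, (∫ y in I (j + 1), u y) = ∫ y in I j, u (y + Δx) := by
    intro j
    have hpre : (fun y : ℝ => y + Δx) ⁻¹' (I (j + 1)) = I j := by
      ext y
      simp only [hI, Set.mem_preimage, Set.mem_Ioo, ha, hb]
      push_cast
      constructor <;> rintro ⟨h1, h2⟩ <;> constructor <;> nlinarith
    have := (measurePreserving_add_right volume Δx).setIntegral_preimage_emb
      (measurableEmbedding_addRight Δx) u (I (j + 1))
    rw [hpre] at this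
    exact this.symm
  -- key step 1
  have key1 : ∀ j : ℤ, ENNReal.ofReal |avg (j + 1) - avg j| ≤
      ENNReal.ofReal (1 / Δx) * ∫⁻ y in I j, g y := by
    intro j
    have hd : avg (j + 1) - avg j = (1 / Δx) * ∫ y in I j, (u (y + Δx) - u y) := by
      rw [havg (j + 1), havg j, ← mul_sub]
      congr 1
      rw [integral_sub (hIntOn Δx j) (hIu j)]
      congr 1
      exact htrans j
    have habs : |avg (j + 1) - avg j| ≤ (1 / Δx) * ∫ y in I j, |u (y + Δx) - u y| := by
      rw [hd, abs_mul, abs_of_pos (by positivity : (0:ℝ) < 1 / Δx)]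
      gcongr
      have hni := norm_integral_le_integral_norm (μ := volume.restrict (I j))
        (f := fun y => u (y + Δx) - u y)
      simpa [Real.norm_eq_abs] using hni
    calc ENNReal.ofReal |avg (j + 1) - avg j|
        ≤ ENNReal.ofReal ((1 / Δx) * ∫ y in I j, |u (y + Δx) - u y|) :=
          ENNReal.ofReal_le_ofReal habs
      _ = ENNReal.ofReal (1 / Δx) * ENNReal.ofReal (∫ y in I j, |u (y + Δx) - u y|) :=
          ENNReal.ofReal_mul (by positivity)
      _ = ENNReal.ofReal (1 / Δx) * ∫⁻ y in I j, g y := by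
          congr 1
          have hintabs : Integrable (fun y => |u (y + Δx) - u y|) (volume.restrict (I j)) := by
            simpa [Pi.sub_apply] using ((hIntOn Δx j).sub (hIu j)).abs
          rw [ofReal_integral_eq_lintegral_ofReal hintabs
            (Filter.Eventually.of_forall fun y => abs_nonneg _)]
  -- disjointness and measurability of cells
  have hImeas : ∀ j : ℤ, MeasurableSet (I j) := fun j => measurableSet_Ioo
  have hdisj : Pairwise (Function.onFun Disjoint I) := by
    intro i j hij
    rw [Function.onFun, Set.Ioo_disjoint_Ioo]
    rcases hij.lt_or_gt with h | h
    · have h1 : (i : ℝ) + 1 ≤ (j : ℝ) := by exact_mod_cast h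
      calc min (b i) (b j) ≤ b i := min_le_left _ _
        _ ≤ a j := by simp only [ha, hb]; nlinarith
        _ ≤ max (a i) (a j) := le_max_right _ _
    · have h1 : (j : ℝ) + 1 ≤ (i : ℝ) := by exact_mod_cast h
      calc min (b i) (b j) ≤ b j := min_le_right _ _
        _ ≤ a i := by simp only [ha, hb]; nlinarith
        _ ≤ max (a i) (a j) := le_max_left _ _
  -- measurability of g
  have hgmeas : Measurable g :=
    ((hmeas.comp (measurable_add_const Δx)).sub hmeas).abs.ennreal_ofReal
  -- step 3 : lintegral of g over ℝ ≤ Δx * V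
  have step3 : (∫⁻ y, g y) ≤ ENNReal.ofReal Δx * V := by
    have hcompl : volume (⋃ j : ℤ, I j)ᶜ = 0 := by
      refine measure_mono_null ?_
        ((Set.countable_range fun k : ℤ => ((k : ℝ) + 1/2) * Δx).measure_zero _)
      intro y hy
      simp only [Set.mem_compl_iff, Set.mem_iUnion, not_exists, hI, Set.mem_Ioo, ha, hb] at hy
      set k : ℤ := ⌊y / Δx + 1/2⌋ with hk
      have h1 : (k : ℝ) ≤ y / Δx + 1/2 := Int.floor_le _
      have h2 : y / Δx + 1/2 < (k : ℝ) + 1 := Int.lt_floor_add_one _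
      have hy1 : ((k : ℝ) - 1/2) * Δx ≤ y := by
        rw [div_add' _ _ _ hΔ.ne'] at h1
        rw [le_div_iff₀ hΔ] at h1
        nlinarith
      have hy2 : y < ((k : ℝ) + 1/2) * Δx := by
        have := (div_lt_iff₀ hΔ).1 (by linarith : y / Δx < (k : ℝ) + 1/2)
        linarith
      have := hy k
      have heq : y = ((k : ℝ) - 1/2) * Δx := by
        by_contra hne
        exact this ⟨lt_of_le_of_ne hy1 (Ne.symm hne), hy2⟩
      exact ⟨k - 1, by push_cast; linarith⟩
    have hsplit : (∫⁻ y, g y) = ∑' j : ℤ, ∫⁻ y in I j, g y := by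
      rw [← lintegral_add_compl g (MeasurableSet.iUnion hImeas),
        setLIntegral_measure_zero _ _ hcompl, add_zero, lintegral_iUnion hImeas hdisj]
    rw [hsplit]
    have htransL : ∀ j : ℤ, (∫⁻ y in I j, g y) = ∫⁻ y in I 0, g (y + j * Δx) := by
      intro j
      have hpre : (fun y : ℝ => y + (j : ℝ) * Δx) ⁻¹' (I j) = I 0 := by
        ext y
        simp only [hI, Set.mem_preimage, Set.mem_Ioo, ha, hb]
        push_cast
        constructor <;> rintro ⟨h1, h2⟩ <;> constructor <;> nlinarith
      have := (measurePreserving_add_right volume ((j : ℝ) * Δx)).setLIntegral_comp_preimage_emb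
        (measurableEmbedding_addRight ((j : ℝ) * Δx)) g (I j)
      rw [hpre] at this
      exact this.symm
    calc ∑' j : ℤ, ∫⁻ y in I j, g y
        = ∑' j : ℤ, ∫⁻ y in I 0, g (y + j * Δx) := by
          exact tsum_congr htransL
      _ = ∫⁻ y in I 0, ∑' j : ℤ, g (y + j * Δx) := by
          exact (lintegral_tsum (μ := volume.restrict (I 0))
            (f := fun (j : ℤ) (y : ℝ) => g (y + j * Δx)) fun j =>
            (hgmeas.comp (measurable_add_const ((j : ℝ) * Δx))).aemeasurable).symm
      _ ≤ ∫⁻ _ in I 0, V := by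
          refine lintegral_mono fun y => ?_
          have hxmono : Monotone fun k : ℤ => y + (k : ℝ) * Δx := by
            intro p q hpq
            have hc : (p : ℝ) ≤ (q : ℝ) := by exact_mod_cast hpq
            simp only
            nlinarith
          have := tsum_edist_le_evar u (fun k : ℤ => y + (k : ℝ) * Δx) hxmono
          refine le_trans (le_of_eq ?_) this
          refine tsum_congr fun k => ?_
          simp only [hg]
          rw [edist_dist, Real.dist_eq]
          congr 2
          push_cast
          ring
      _ = ENNReal.ofReal Δx * V := by
          rw [setLIntegral_const]
          have : volume (I 0) = ENNReal.ofReal Δx := by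
            simp only [hI, Real.volume_Ioo, ha, hb]
            congr 1
            push_cast
            ring
          rw [this, mul_comm]
  -- combine
  calc ∑' j : ℤ, ENNReal.ofReal |avg (j + 1) - avg j|
      ≤ ∑' j : ℤ, ENNReal.ofReal (1 / Δx) * ∫⁻ y in I j, g y := ENNReal.tsum_le_tsum key1
    _ = ENNReal.ofReal (1 / Δx) * ∑' j : ℤ, ∫⁻ y in I j, g y := ENNReal.tsum_mul_left
    _ = ENNReal.ofReal (1 / Δx) * ∫⁻ y in ⋃ j : ℤ, I j, g y := by
        rw [lintegral_iUnion hImeas hdisj]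
    _ ≤ ENNReal.ofReal (1 / Δx) * ∫⁻ y, g y := by
        gcongr
        exact Measure.restrict_le_self
    _ ≤ ENNReal.ofReal (1 / Δx) * (ENNReal.ofReal Δx * V) := by gcongr
    _ = V := by
        rw [← mul_assoc, ← ENNReal.ofReal_mul (by positivity)]
        rw [one_div, inv_mul_cancel₀ hΔ.ne', ENNReal.ofReal_one, one_mul]
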